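/- Let 3 < β < 4 and let T : ℝ → ℝ be defined by T(x) = x + 2 if x ≤ 0 and T(x) = β − 2x if x > 0. Let μ be the measure on ℝ with density ρ with respect to Lebesgue measure, where ρ(x) = 1/18 for x ∈ (−β, 2−β), ρ(x) = 1/9 for x ∈ (2−β, β−4), ρ(x) = 2/9 for x ∈ (β−4, β−2), ρ(x) = 1/3 for x ∈ (β−2, 2), ρ(x) = 1/9 for x ∈ (2, β), and ρ(x) = 0 otherwise. Then μ is a probability measure, μ is T-invariant, and μ([0, β]) = 2/3. -/

import Mathlib

open MeasureTheory Set

noncomputable def piece (a b c : ℝ) : ℝ → ENNReal :=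
  (Set.Ioo a b).indicator (fun _ => ENNReal.ofReal c)

lemma piece_meas (a b c : ℝ) : Measurable (piece a b c) :=
  measurable_const.indicator measurableSet_Ioo

lemma piece_of_mem {a b x : ℝ} (c : ℝ) (h1 : a < x) (h2 : x < b) :
    piece a b c x = ENNReal.ofReal c :=
  indicator_of_mem (mem_Ioo.mpr ⟨h1, h2⟩) _

lemma piece_zero_left {a b x : ℝ} (c : ℝ) (h : x ≤ a) : piece a b c x = 0 :=
  indicator_of_notMem (by rw [mem_Ioo]; rintro ⟨h', _⟩; linarith) _

lemma piece_zero_right {a b x : ℝ} (c : ℝ) (h : b ≤ x) : piece a b c x = 0 :=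
  indicator_of_notMem (by rw [mem_Ioo]; rintro ⟨_, h'⟩; linarith) _

lemma lintegral_piece (a b c : ℝ) :
    ∫⁻ x, piece a b c x = ENNReal.ofReal c * ENNReal.ofReal (b - a) := by
  rw [piece, lintegral_indicator_const measurableSet_Ioo, Real.volume_Ioo]

lemma setLIntegral_piece (a b c : ℝ) {s : Set ℝ} (hs : MeasurableSet s) :
    ∫⁻ x in s, piece a b c x = ENNReal.ofReal c * volume (Ioo a b ∩ s) := by
  rw [piece, lintegral_indicator_const measurableSet_Ioo,
    Measure.restrict_apply measurableSet_Ioo]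

lemma aux_map_affine (a b : ℝ) (ha : a ≠ 0) (f : ℝ → ENNReal) (hf : Measurable f) :
    (volume.withDensity f).map (fun x => a * x + b)
      = volume.withDensity (fun y => ENNReal.ofReal |a|⁻¹ * f ((y - b) / a)) := by
  have hφ : Measurable fun x : ℝ => a * x + b := by fun_prop
  have key : Measure.map (fun x : ℝ => a * x + b) (ENNReal.ofReal |a| • volume) = volume := by
    have h1 : (fun x : ℝ => a * x + b) = (fun x : ℝ => x + b) ∘ (fun x : ℝ => a * x) := rfl
    rw [Measure.map_smul, h1, ← Measure.map_map (by fun_prop) (by fun_prop),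
      ← Measure.map_smul]
    rw [show (fun x : ℝ => a * x) = (a * ·) from rfl, Real.smul_map_volume_mul_left ha]
    exact map_add_right_eq_self volume b
  have hg : Measurable fun y : ℝ => ENNReal.ofReal |a|⁻¹ * f ((y - b) / a) := by
    exact (hf.comp (by fun_prop)).const_mul _
  ext s hs
  rw [Measure.map_apply hφ hs, withDensity_apply _ (hφ hs), withDensity_apply _ hs]
  conv_rhs => rw [← key]
  rw [setLIntegral_map hs hg hφ]
  simp only [add_sub_cancel_right, mul_div_cancel_left₀ _ ha]
  rw [Measure.restrict_smul, lintegral_smul_measure, lintegral_const_mul _ hf, smul_eq_mul, ← mul_assoc,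
    ← ENNReal.ofReal_mul (abs_nonneg a), mul_inv_cancel₀ (abs_ne_zero.mpr ha),
    ENNReal.ofReal_one, one_mul]

theorem invariant_density_s_two_beta_three_four (β : ℝ) (hβ₁ : 3 < β) (hβ₂ : β < 4)
    (T : ℝ → ℝ) (hT : T = fun x => if x ≤ 0 then x + 2 else β - 2 * x)
    (ρ : ℝ → ENNReal)
    (hρ : ρ = fun x =>
      if x ∈ Ioo (-β) (2 - β) then ENNReal.ofReal (1 / 18)
      else if x ∈ Ioo (2 - β) (β - 4) then ENNReal.ofReal (1 / 9)
      else if x ∈ Ioo (β - 4) (β - 2) then ENNReal.ofReal (2 / 9)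
      else if x ∈ Ioo (β - 2) 2 then ENNReal.ofReal (1 / 3)
      else if x ∈ Ioo (2 : ℝ) β then ENNReal.ofReal (1 / 9)
      else 0)
    (μ : Measure ℝ) (hμ : μ = volume.withDensity ρ) :
    IsProbabilityMeasure μ ∧ μ.map T = μ ∧ μ (Icc (0 : ℝ) β) = ENNReal.ofReal (2 / 3) := by
  -- measurability of ρ
  have hρm : Measurable ρ := by
    rw [hρ]
    exact Measurable.ite measurableSet_Ioo measurable_const <|
      Measurable.ite measurableSet_Ioo measurable_const <|
      Measurable.ite measurableSet_Ioo measurable_const <|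
      Measurable.ite measurableSet_Ioo measurable_const <|
      Measurable.ite measurableSet_Ioo measurable_const measurable_const
  -- evaluation lemmas for ρ
  have e0 : ∀ x : ℝ, x ≤ -β → ρ x = 0 := by
    intro x h
    have n1 : x ∉ Ioo (-β) (2-β) := by rw [mem_Ioo]; rintro ⟨h', _⟩; linarith
    have n2 : x ∉ Ioo (2-β) (β-4) := by rw [mem_Ioo]; rintro ⟨h', _⟩; linarith
    have n3 : x ∉ Ioo (β-4) (β-2) := by rw [mem_Ioo]; rintro ⟨h', _⟩; linarith
    have n4 : x ∉ Ioo (β-2) 2 := by rw [mem_Ioo]; rintro ⟨h', _⟩; linarith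
    have n5 : x ∉ Ioo (2:ℝ) β := by rw [mem_Ioo]; rintro ⟨h', _⟩; linarith
    simp only [hρ]
    rw [if_neg n1, if_neg n2, if_neg n3, if_neg n4, if_neg n5]
  have e1 : ∀ x : ℝ, -β < x → x < 2 - β → ρ x = ENNReal.ofReal (1/18) := by
    intro x h1 h2
    simp only [hρ]
    rw [if_pos (mem_Ioo.mpr ⟨h1, h2⟩)]
  have e2 : ∀ x : ℝ, 2 - β < x → x < β - 4 → ρ x = ENNReal.ofReal (1/9) := by
    intro x h1 h2
    have n1 : x ∉ Ioo (-β) (2-β) := by rw [mem_Ioo]; rintro ⟨_, h⟩; linarith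
    simp only [hρ]
    rw [if_neg n1, if_pos (mem_Ioo.mpr ⟨h1, h2⟩)]
  have e3 : ∀ x : ℝ, β - 4 < x → x < β - 2 → ρ x = ENNReal.ofReal (2/9) := by
    intro x h1 h2
    have n1 : x ∉ Ioo (-β) (2-β) := by rw [mem_Ioo]; rintro ⟨_, h⟩; linarith
    have n2 : x ∉ Ioo (2-β) (β-4) := by rw [mem_Ioo]; rintro ⟨_, h⟩; linarith
    simp only [hρ]
    rw [if_neg n1, if_neg n2, if_pos (mem_Ioo.mpr ⟨h1, h2⟩)]
  have e4 : ∀ x : ℝ, β - 2 < x → x < 2 → ρ x = ENNReal.ofReal (1/3) := by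
    intro x h1 h2
    have n1 : x ∉ Ioo (-β) (2-β) := by rw [mem_Ioo]; rintro ⟨_, h⟩; linarith
    have n2 : x ∉ Ioo (2-β) (β-4) := by rw [mem_Ioo]; rintro ⟨_, h⟩; linarith
    have n3 : x ∉ Ioo (β-4) (β-2) := by rw [mem_Ioo]; rintro ⟨_, h⟩; linarith
    simp only [hρ]
    rw [if_neg n1, if_neg n2, if_neg n3, if_pos (mem_Ioo.mpr ⟨h1, h2⟩)]
  have e5 : ∀ x : ℝ, 2 < x → x < β → ρ x = ENNReal.ofReal (1/9) := by
    intro x h1 h2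
    have n1 : x ∉ Ioo (-β) (2-β) := by rw [mem_Ioo]; rintro ⟨_, h⟩; linarith
    have n2 : x ∉ Ioo (2-β) (β-4) := by rw [mem_Ioo]; rintro ⟨_, h⟩; linarith
    have n3 : x ∉ Ioo (β-4) (β-2) := by rw [mem_Ioo]; rintro ⟨_, h⟩; linarith
    have n4 : x ∉ Ioo (β-2) 2 := by rw [mem_Ioo]; rintro ⟨_, h⟩; linarith
    simp only [hρ]
    rw [if_neg n1, if_neg n2, if_neg n3, if_neg n4, if_pos (mem_Ioo.mpr ⟨h1, h2⟩)]
  have e6 : ∀ x : ℝ, β ≤ x → ρ x = 0 := by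
    intro x h
    have n1 : x ∉ Ioo (-β) (2-β) := by rw [mem_Ioo]; rintro ⟨_, h'⟩; linarith
    have n2 : x ∉ Ioo (2-β) (β-4) := by rw [mem_Ioo]; rintro ⟨_, h'⟩; linarith
    have n3 : x ∉ Ioo (β-4) (β-2) := by rw [mem_Ioo]; rintro ⟨_, h'⟩; linarith
    have n4 : x ∉ Ioo (β-2) 2 := by rw [mem_Ioo]; rintro ⟨_, h'⟩; linarith
    have n5 : x ∉ Ioo (2:ℝ) β := by rw [mem_Ioo]; rintro ⟨_, h'⟩; linarith
    simp only [hρ]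
    rw [if_neg n1, if_neg n2, if_neg n3, if_neg n4, if_neg n5]
  -- the exceptional finite set
  have hE : volume ({-β, 2-β, β-4, 4-β, β-2, 2, β} : Set ℝ) = 0 :=
    Set.Countable.measure_zero (Set.toFinite _).countable _
  -- the main pointwise computation
  have claim : ∀ y : ℝ, y ∉ ({-β, 2-β, β-4, 4-β, β-2, 2, β} : Set ℝ) →
      (piece (-β) (2-β) (1/18) y + (piece (2-β) (β-4) (1/9) y + (piece (β-4) (β-2) (2/9) y +
        (piece (β-2) 2 (1/3) y + piece 2 β (1/9) y))) = ρ y)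
      ∧ ((Iic 0).indicator ρ (y-2) + ENNReal.ofReal (1/2) * (Ioi 0).indicator ρ ((β-y)/2)
          = ρ y) := by
    intro y hy
    simp only [mem_insert_iff, mem_singleton_iff, not_or] at hy
    obtain ⟨h1, h2, h3, h4, h5, h6, h7⟩ := hy
    rcases lt_or_gt_of_ne h1 with hr | hr
    · -- y < -β
      constructor
      · rw [piece_zero_left _ hr.le, piece_zero_left _ (by linarith),
          piece_zero_left _ (by linarith), piece_zero_left _ (by linarith),
          piece_zero_left _ (by linarith), e0 y hr.le]
        simp
      · rw [indicator_of_mem (mem_Iic.mpr (by linarith)) ρ, e0 (y-2) (by linarith),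
          indicator_of_mem (mem_Ioi.mpr (by linarith)) ρ, e6 ((β-y)/2) (by linarith),
          e0 y hr.le]
        simp
    rcases lt_or_gt_of_ne h2 with hr2 | hr2
    · -- -β < y < 2 - β
      constructor
      · rw [piece_of_mem _ hr hr2, piece_zero_left _ hr2.le, piece_zero_left _ (by linarith),
          piece_zero_left _ (by linarith), piece_zero_left _ (by linarith), e1 y hr hr2]
        simp
      · rw [indicator_of_mem (mem_Iic.mpr (by linarith)) ρ, e0 (y-2) (by linarith),
          indicator_of_mem (mem_Ioi.mpr (by linarith)) ρ, e5 ((β-y)/2) (by linarith) (by linarith),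
          e1 y hr hr2, zero_add, ← ENNReal.ofReal_mul (by norm_num)]
        norm_num
    rcases lt_or_gt_of_ne h3 with hr3 | hr3
    · -- 2 - β < y < β - 4
      constructor
      · rw [piece_zero_right _ hr2.le, piece_of_mem _ hr2 hr3, piece_zero_left _ (by linarith),
          piece_zero_left _ (by linarith), piece_zero_left _ (by linarith), e2 y hr2 hr3]
        simp
      · rw [indicator_of_mem (mem_Iic.mpr (by linarith)) ρ, e1 (y-2) (by linarith) (by linarith),
          indicator_of_mem (mem_Ioi.mpr (by linarith)) ρ, e5 ((β-y)/2) (by linarith) (by linarith),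
          e2 y hr2 hr3, ← ENNReal.ofReal_mul (by norm_num),
          ← ENNReal.ofReal_add (by norm_num) (by norm_num)]
        norm_num
    rcases lt_or_gt_of_ne h4 with hr4 | hr4
    · -- β - 4 < y < 4 - β
      constructor
      · rw [piece_zero_right _ (by linarith), piece_zero_right _ hr3.le,
          piece_of_mem _ hr3 (by linarith), piece_zero_left _ (by linarith),
          piece_zero_left _ (by linarith), e3 y hr3 (by linarith)]
        simp
      · rw [indicator_of_mem (mem_Iic.mpr (by linarith)) ρ, e1 (y-2) (by linarith) (by linarith),
          indicator_of_mem (mem_Ioi.mpr (by linarith)) ρ, e4 ((β-y)/2) (by linarith) (by linarith),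
          e3 y hr3 (by linarith), ← ENNReal.ofReal_mul (by norm_num),
          ← ENNReal.ofReal_add (by norm_num) (by norm_num)]
        norm_num
    rcases lt_or_gt_of_ne h5 with hr5 | hr5
    · -- 4 - β < y < β - 2
      constructor
      · rw [piece_zero_right _ (by linarith), piece_zero_right _ (by linarith),
          piece_of_mem _ (by linarith) hr5, piece_zero_left _ hr5.le,
          piece_zero_left _ (by linarith), e3 y (by linarith) hr5]
        simp
      · rw [indicator_of_mem (mem_Iic.mpr (by linarith)) ρ, e2 (y-2) (by linarith) (by linarith),
          indicator_of_mem (mem_Ioi.mpr (by linarith)) ρ, e3 ((β-y)/2) (by linarith) (by linarith),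
          e3 y (by linarith) hr5, ← ENNReal.ofReal_mul (by norm_num),
          ← ENNReal.ofReal_add (by norm_num) (by norm_num)]
        norm_num
    rcases lt_or_gt_of_ne h6 with hr6 | hr6
    · -- β - 2 < y < 2
      constructor
      · rw [piece_zero_right _ (by linarith), piece_zero_right _ (by linarith),
          piece_zero_right _ hr5.le, piece_of_mem _ hr5 hr6, piece_zero_left _ hr6.le,
          e4 y hr5 hr6]
        simp
      · rw [indicator_of_mem (mem_Iic.mpr (by linarith)) ρ, e3 (y-2) (by linarith) (by linarith),
          indicator_of_mem (mem_Ioi.mpr (by linarith)) ρ, e3 ((β-y)/2) (by linarith) (by linarith),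
          e4 y hr5 hr6, ← ENNReal.ofReal_mul (by norm_num),
          ← ENNReal.ofReal_add (by norm_num) (by norm_num)]
        norm_num
    rcases lt_or_gt_of_ne h7 with hr7 | hr7
    · -- 2 < y < β
      constructor
      · rw [piece_zero_right _ (by linarith), piece_zero_right _ (by linarith),
          piece_zero_right _ (by linarith), piece_zero_right _ hr6.le,
          piece_of_mem _ hr6 hr7, e5 y hr6 hr7]
        simp
      · rw [indicator_of_notMem (by simp only [mem_Iic, not_le]; linarith) ρ,
          indicator_of_mem (mem_Ioi.mpr (by linarith)) ρ,
          e3 ((β-y)/2) (by linarith) (by linarith),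
          e5 y hr6 hr7, ← ENNReal.ofReal_mul (by norm_num)]
        norm_num
    · -- β < y
      constructor
      · rw [piece_zero_right _ (by linarith), piece_zero_right _ (by linarith),
          piece_zero_right _ (by linarith), piece_zero_right _ (by linarith),
          piece_zero_right _ hr7.le, e6 y hr7.le]
        simp
      · rw [indicator_of_notMem (by simp only [mem_Iic, not_le]; linarith) ρ,
          indicator_of_notMem (by simp only [mem_Ioi, not_lt]; linarith) ρ,
          e6 y hr7.le]
        simp
  -- μ equals the measure with density given by the pieces
  have hνρ : (fun y => piece (-β) (2-β) (1/18) y + (piece (2-β) (β-4) (1/9) y +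
      (piece (β-4) (β-2) (2/9) y + (piece (β-2) 2 (1/3) y + piece 2 β (1/9) y))))
        =ᵐ[volume] ρ := by
    rw [Filter.EventuallyEq, ae_iff]
    refine measure_mono_null (fun y hy => ?_) hE
    by_contra hyE
    exact hy ((claim y hyE).1)
  have hν : μ = volume.withDensity (fun y => piece (-β) (2-β) (1/18) y +
      (piece (2-β) (β-4) (1/9) y + (piece (β-4) (β-2) (2/9) y +
        (piece (β-2) 2 (1/3) y + piece 2 β (1/9) y)))) := by
    rw [hμ]
    exact (withDensity_congr_ae hνρ).symm
  refine ⟨?_, ?_, ?_⟩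
  · -- probability measure
    constructor
    rw [hν, withDensity_apply _ MeasurableSet.univ, Measure.restrict_univ,
      lintegral_add_left (piece_meas _ _ _), lintegral_add_left (piece_meas _ _ _),
      lintegral_add_left (piece_meas _ _ _), lintegral_add_left (piece_meas _ _ _),
      lintegral_piece, lintegral_piece, lintegral_piece, lintegral_piece, lintegral_piece,
      ← ENNReal.ofReal_mul (by norm_num), ← ENNReal.ofReal_mul (by norm_num),
      ← ENNReal.ofReal_mul (by norm_num), ← ENNReal.ofReal_mul (by norm_num),
      ← ENNReal.ofReal_mul (by norm_num),
      ← ENNReal.ofReal_add (by nlinarith) (by nlinarith),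
      ← ENNReal.ofReal_add (by nlinarith) (by nlinarith),
      ← ENNReal.ofReal_add (by nlinarith) (by nlinarith),
      ← ENNReal.ofReal_add (by nlinarith) (by nlinarith),
      ← ENNReal.ofReal_one]
    congr 1
    ring
  · -- invariance
    have hρ₁m : Measurable ((Iic (0:ℝ)).indicator ρ) := hρm.indicator measurableSet_Iic
    have hρ₂m : Measurable ((Ioi (0:ℝ)).indicator ρ) := hρm.indicator measurableSet_Ioi
    have hTm : Measurable T := by
      rw [hT]
      exact Measurable.ite measurableSet_Iic (by fun_prop) (by fun_prop)
    have hsplit : ρ = (Iic 0).indicator ρ + (Ioi 0).indicator ρ := by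
      funext x
      by_cases h : x ≤ 0
      · rw [Pi.add_apply, indicator_of_mem (mem_Iic.mpr h),
          indicator_of_notMem (by simp only [mem_Ioi, not_lt]; exact h), add_zero]
      · push_neg at h
        rw [Pi.add_apply, indicator_of_notMem (by simp only [mem_Iic, not_le]; exact h),
          indicator_of_mem (mem_Ioi.mpr h), zero_add]
    have hWD : volume.withDensity ρ = volume.withDensity ((Iic 0).indicator ρ)
        + volume.withDensity ((Ioi 0).indicator ρ) := by
      conv_lhs => rw [hsplit]
      rw [withDensity_add_left hρ₁m]
    have hz₂ : volume.withDensity ((Iic (0:ℝ)).indicator ρ) (Ioi 0) = 0 := by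
      rw [withDensity_apply _ measurableSet_Ioi]
      have h0 : ∀ x ∈ Ioi (0:ℝ), (Iic (0:ℝ)).indicator ρ x = (0:ENNReal) := fun x hx =>
        indicator_of_notMem (by simp only [mem_Iic, not_le]; exact hx) _
      rw [setLIntegral_congr_fun measurableSet_Ioi h0]
      simp
    have hz₁ : volume.withDensity ((Ioi (0:ℝ)).indicator ρ) (Iic 0) = 0 := by
      rw [withDensity_apply _ measurableSet_Iic]
      have h0 : ∀ x ∈ Iic (0:ℝ), (Ioi (0:ℝ)).indicator ρ x = (0:ENNReal) := fun x hx =>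
        indicator_of_notMem (by simp only [mem_Ioi, not_lt]; exact hx) _
      rw [setLIntegral_congr_fun measurableSet_Iic h0]
      simp
    have hc₁ : (volume.withDensity ((Iic (0:ℝ)).indicator ρ)).map T
        = (volume.withDensity ((Iic (0:ℝ)).indicator ρ)).map (fun x => 1 * x + 2) := by
      apply Measure.map_congr
      rw [Filter.EventuallyEq, ae_iff]
      refine measure_mono_null (fun x hx => ?_) hz₂
      simp only [mem_setOf_eq] at hx
      rw [mem_Ioi]
      by_contra hc
      push_neg at hc
      exact hx (by simp only [hT]; rw [if_pos hc]; ring)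
    have hc₂ : (volume.withDensity ((Ioi (0:ℝ)).indicator ρ)).map T
        = (volume.withDensity ((Ioi (0:ℝ)).indicator ρ)).map (fun x => (-2) * x + β) := by
      apply Measure.map_congr
      rw [Filter.EventuallyEq, ae_iff]
      refine measure_mono_null (fun x hx => ?_) hz₁
      simp only [mem_setOf_eq] at hx
      rw [mem_Iic]
      by_contra hc
      push_neg at hc
      exact hx (by simp only [hT]; rw [if_neg (not_le.mpr hc)]; ring)
    have hd₁ : (fun y => ENNReal.ofReal |(1:ℝ)|⁻¹ * (Iic (0:ℝ)).indicator ρ ((y - 2)/1))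
        = fun y => (Iic (0:ℝ)).indicator ρ (y - 2) := by
      funext y
      norm_num
    have hd₂ : (fun y => ENNReal.ofReal |(-2:ℝ)|⁻¹ * (Ioi (0:ℝ)).indicator ρ ((y - β)/(-2)))
        = fun y => ENNReal.ofReal (1/2) * (Ioi (0:ℝ)).indicator ρ ((β - y)/2) := by
      funext y
      rw [show (y - β)/(-2) = (β - y)/2 by ring]
      norm_num
    have hm1 : Measurable fun y : ℝ => (Iic (0:ℝ)).indicator ρ (y - 2) :=
      hρ₁m.comp (by fun_prop)
    have hae2 : (fun y : ℝ => (Iic (0:ℝ)).indicator ρ (y - 2))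
        + (fun y => ENNReal.ofReal (1/2) * (Ioi (0:ℝ)).indicator ρ ((β - y)/2))
          =ᵐ[volume] ρ := by
      rw [Filter.EventuallyEq, ae_iff]
      refine measure_mono_null (fun y hy => ?_) hE
      by_contra hyE
      exact hy ((claim y hyE).2)
    conv_lhs => rw [hμ, hWD]
    rw [Measure.map_add _ _ hTm, hc₁, hc₂,
      aux_map_affine 1 2 one_ne_zero _ hρ₁m, aux_map_affine (-2) β (by norm_num) _ hρ₂m,
      hd₁, hd₂, ← withDensity_add_left hm1, hμ]
    exact withDensity_congr_ae hae2
  · -- measure of Icc 0 β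
    have s1 : Ioo (-β) (2-β) ∩ Icc 0 β = ∅ := by
      rw [eq_empty_iff_forall_notMem]
      rintro x ⟨⟨_, h2⟩, h3, _⟩
      linarith
    have s2 : Ioo (2-β) (β-4) ∩ Icc 0 β = ∅ := by
      rw [eq_empty_iff_forall_notMem]
      rintro x ⟨⟨_, h2⟩, h3, _⟩
      linarith
    have s3 : Ioo (β-4) (β-2) ∩ Icc 0 β = Ico 0 (β-2) := by
      ext x
      simp only [mem_inter_iff, mem_Ioo, mem_Icc, mem_Ico]
      constructor
      · rintro ⟨⟨_, h2⟩, h3, _⟩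
        exact ⟨h3, h2⟩
      · rintro ⟨h1, h2⟩
        exact ⟨⟨by linarith, h2⟩, h1, by linarith⟩
    have s4 : Ioo (β-2) 2 ∩ Icc 0 β = Ioo (β-2) 2 := by
      rw [inter_eq_left]
      intro x hx
      rw [mem_Ioo] at hx
      exact mem_Icc.mpr ⟨by linarith [hx.1], by linarith [hx.2]⟩
    have s5 : Ioo (2:ℝ) β ∩ Icc 0 β = Ioo (2:ℝ) β := by
      rw [inter_eq_left]
      intro x hx
      rw [mem_Ioo] at hx
      exact mem_Icc.mpr ⟨by linarith [hx.1], by linarith [hx.2]⟩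
    rw [hν, withDensity_apply _ measurableSet_Icc,
      lintegral_add_left (piece_meas _ _ _), lintegral_add_left (piece_meas _ _ _),
      lintegral_add_left (piece_meas _ _ _), lintegral_add_left (piece_meas _ _ _),
      setLIntegral_piece _ _ _ measurableSet_Icc, setLIntegral_piece _ _ _ measurableSet_Icc,
      setLIntegral_piece _ _ _ measurableSet_Icc, setLIntegral_piece _ _ _ measurableSet_Icc,
      setLIntegral_piece _ _ _ measurableSet_Icc,
      s1, s2, s3, s4, s5, measure_empty]
    simp only [mul_zero, zero_add]
    rw [Real.volume_Ico, Real.volume_Ioo, Real.volume_Ioo,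
      ← ENNReal.ofReal_mul (by norm_num), ← ENNReal.ofReal_mul (by norm_num),
      ← ENNReal.ofReal_mul (by norm_num),
      ← ENNReal.ofReal_add (by nlinarith) (by nlinarith),
      ← ENNReal.ofReal_add (by nlinarith) (by nlinarith)]
    congr 1
    ring
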